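/- arXiv:1407.2894 — 4 statements merged into one kernel-verified Lean document; each statement's English description precedes it below -/
import Mathlib

section
/- Every countable chain C that is not scattered satisfies sib(C) = 2^ℵ₀; equivalently, every countable chain C with sib(C) < 2^ℵ₀ is scattered. -/
universe u v

/-- `sib C` is the number of isomorphism classes of chains equimorphic to `C`,
computed as the number of order-isomorphism classes of subsets `S` of `C`
such that `C` order-embeds into `S`. -/
def sib (C : Type u) [LinearOrder C] : Cardinal.{u} :=
  Cardinal.mk (Quot fun S T : {S : Set C // Nonempty (C ↪o ↥S)} =>
    Nonempty (↥S.1 ≃o ↥T.1))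

/-- A chain is scattered if `ℚ` does not embed into it. -/
def Scattered (C : Type u) [LinearOrder C] : Prop := IsEmpty (ℚ ↪o C)

open Classical in
/-- Block length function encoding a set `A ⊆ ℕ` into block sizes over ℚ. -/
noncomputable def sibAux.f (A : Set ℕ) (q : ℚ) : ℕ :=
  if 0 ≤ q.num ∧ q.den = 1 ∧ q.num.toNat ∈ A then q.num.toNat + 2 else 1

namespace sibAux

theorem f_pos (A : Set ℕ) (q : ℚ) : 0 < f A q := by
  unfold f; split <;> omega

theorem f_natCast {A : Set ℕ} {n : ℕ} (hn : n ∈ A) : f A (n : ℚ) = n + 2 := by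
  unfold f
  rw [if_pos]
  · simp
  · exact ⟨by simp, by simp, by simpa using hn⟩

theorem mem_of_f_eq {A : Set ℕ} {n : ℕ} {q : ℚ} (h : f A q = n + 2) : n ∈ A := by
  unfold f at h
  split at h
  · rename_i hc
    have : q.num.toNat = n := by omega
    exact this ▸ hc.2.2
  · omega

/-- The order `L A`: each rational `q` replaced by a block of `f A q` points. -/
def L (A : Set ℕ) : Type :=
  {p : ℚ ×ₗ ℕ // (ofLex p).2 < f A (ofLex p).1}

noncomputable instance (A : Set ℕ) : LinearOrder (L A) :=
  inferInstanceAs (LinearOrder {p : ℚ ×ₗ ℕ // (ofLex p).2 < f A (ofLex p).1})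

instance : Countable (ℚ ×ₗ ℕ) := inferInstanceAs (Countable (ℚ × ℕ))

instance (A : Set ℕ) : Countable (L A) :=
  inferInstanceAs (Countable {p : ℚ ×ₗ ℕ // (ofLex p).2 < f A (ofLex p).1})

/-- Constructor for elements of `L A`. -/
def el {A : Set ℕ} (q : ℚ) (k : ℕ) (h : k < f A q) : L A := ⟨toLex (q, k), h⟩

theorem lt_iff' {A : Set ℕ} (x y : L A) :
    x < y ↔ (ofLex x.1).1 < (ofLex y.1).1 ∨
      ((ofLex x.1).1 = (ofLex y.1).1 ∧ (ofLex x.1).2 < (ofLex y.1).2) :=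
  Prod.Lex.lt_iff (x := x.1) (y := y.1)

theorem el_lt_el {A : Set ℕ} {q q' : ℚ} {k k' : ℕ} {h : k < f A q} {h' : k' < f A q'} :
    el q k h < el q' k' h' ↔ q < q' ∨ (q = q' ∧ k < k') := lt_iff' _ _

theorem el_covBy_el {A : Set ℕ} {q q' : ℚ} {k k' : ℕ} {h : k < f A q} {h' : k' < f A q'} :
    el q k h ⋖ el q' k' h' ↔ q = q' ∧ k' = k + 1 := by
  constructor
  · intro hc
    rcases el_lt_el.mp hc.1 with hq | ⟨rfl, hk⟩
    · obtain ⟨r, hr1, hr2⟩ := exists_between hq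
      have hxz : el q k h < el r 0 (f_pos A r) := el_lt_el.mpr (Or.inl hr1)
      have hzy : el r 0 (f_pos A r) < el q' k' h' := el_lt_el.mpr (Or.inl hr2)
      exact absurd hzy (hc.2 hxz)
    · refine ⟨rfl, ?_⟩
      by_contra hne
      have hk1 : k + 1 < k' := by omega
      have hlt : k + 1 < f A q := lt_trans hk1 h'
      have hxz : el q k h < el q (k+1) hlt := el_lt_el.mpr (Or.inr ⟨rfl, by omega⟩)
      have hzy : el q (k+1) hlt < el q k' h' := el_lt_el.mpr (Or.inr ⟨rfl, hk1⟩)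
      exact absurd hzy (hc.2 hxz)
  · rintro ⟨rfl, rfl⟩
    constructor
    · exact el_lt_el.mpr (Or.inr ⟨rfl, by omega⟩)
    · intro z hxz hzy
      have hx := (lt_iff' _ _).mp hxz
      have hy := (lt_iff' _ _).mp hzy
      simp only [el, ofLex_toLex] at hx hy
      rcases hx with h1 | ⟨e1, h1⟩ <;> rcases hy with h2 | ⟨e2, h2⟩
      · exact lt_irrefl q (h1.trans h2)
      · rw [e2] at h1; exact lt_irrefl q h1
      · rw [← e1] at h2; exact lt_irrefl q h2
      · omega

theorem covBy_iff {A : Set ℕ} (x y : L A) :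
    x ⋖ y ↔ (ofLex x.1).1 = (ofLex y.1).1 ∧ (ofLex y.1).2 = (ofLex x.1).2 + 1 :=
  el_covBy_el (h := x.2) (h' := y.2)

theorem noPred_iff {A : Set ℕ} (x : L A) :
    (∀ z, ¬ z ⋖ x) ↔ (ofLex x.1).2 = 0 := by
  constructor
  · intro hz
    by_contra hk
    have hk' : (ofLex x.1).2 - 1 < f A (ofLex x.1).1 := lt_trans (by omega) x.2
    exact hz (el (ofLex x.1).1 ((ofLex x.1).2 - 1) hk')
      ((covBy_iff _ x).mpr ⟨rfl, by simp only [el, ofLex_toLex]; omega⟩)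
  · intro h0 z hz
    have := (covBy_iff z x).mp hz
    omega
theorem noSucc_iff {A : Set ℕ} (x : L A) :
    (∀ z, ¬ x ⋖ z) ↔ (ofLex x.1).2 + 1 = f A (ofLex x.1).1 := by
  constructor
  · intro hz
    by_contra hk
    have hk' : (ofLex x.1).2 + 1 < f A (ofLex x.1).1 := lt_of_le_of_ne x.2 hk
    exact hz (el (ofLex x.1).1 ((ofLex x.1).2 + 1) hk')
      ((covBy_iff x _).mpr ⟨rfl, rfl⟩)
  · intro h0 z hz
    obtain ⟨he, hk⟩ := (covBy_iff x z).mp hz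
    have := z.2
    rw [← he] at this
    omega

/-- The invariant: there is a maximal covering chain of length `n + 2`. -/
def P (X : Type v) [LinearOrder X] (n : ℕ) : Prop :=
  ∃ g : ℕ → X, (∀ i < n + 1, g i ⋖ g (i + 1)) ∧ (∀ z, ¬ z ⋖ g 0) ∧ (∀ z, ¬ g (n + 1) ⋖ z)

theorem P_of_orderIso {X : Type v} {Y : Type u} [LinearOrder X] [LinearOrder Y]
    (e : X ≃o Y) {n : ℕ} (hP : P X n) : P Y n := by
  obtain ⟨g, h1, h2, h3⟩ := hP
  refine ⟨fun i => e (g i), fun i hi => (apply_covBy_apply_iff e).mpr (h1 i hi), ?_, ?_⟩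
  · intro z hz
    rw [← e.apply_symm_apply z] at hz
    exact h2 _ ((apply_covBy_apply_iff e).mp hz)
  · intro z hz
    rw [← e.apply_symm_apply z] at hz
    exact h3 _ ((apply_covBy_apply_iff e).mp hz)

theorem P_iff {A : Set ℕ} {n : ℕ} : P (L A) n ↔ n ∈ A := by
  constructor
  · rintro ⟨g, h1, h2, h3⟩
    have hbot : (ofLex (g 0).1).2 = 0 := (noPred_iff _).mp h2
    have key : ∀ i, i ≤ n + 1 →
        (ofLex (g i).1).1 = (ofLex (g 0).1).1 ∧ (ofLex (g i).1).2 = i := by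
      intro i
      induction i with
      | zero => exact fun _ => ⟨rfl, hbot⟩
      | succ j ih =>
        intro hj
        obtain ⟨hq, hk⟩ := ih (by omega)
        obtain ⟨hq', hk'⟩ := (covBy_iff (g j) (g (j+1))).mp (h1 j (by omega))
        exact ⟨hq' ▸ hq, by omega⟩
    obtain ⟨hq, hk⟩ := key (n + 1) le_rfl
    have htop := (noSucc_iff _).mp h3
    rw [hk, hq] at htop
    have hfq : f A ((ofLex ((g (0:ℕ)).1)).1) = n + 2 := by omega
    exact mem_of_f_eq hfq
  · intro hn
    have hf : f A ((n : ℚ)) = n + 2 := f_natCast hn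
    refine ⟨fun i => el (n : ℚ) (min i (n + 1)) (by rw [hf]; omega), ?_, ?_, ?_⟩
    · intro i hi
      exact el_covBy_el.mpr ⟨rfl, by omega⟩
    · rw [noPred_iff]
      simp [el]
    · rw [noSucc_iff]
      simp [el, hf]

/-- `ℚ` embeds into `L A` via the bottom of each block. -/
noncomputable def qEmb (A : Set ℕ) : ℚ ↪o L A :=
  OrderEmbedding.ofStrictMono (fun q => el q 0 (f_pos A q))
    (fun _ _ hab => el_lt_el.mpr (Or.inl hab))

end sibAux

theorem sib_eq_continuum_of_countable_not_scattered
    (C : Type u) [LinearOrder C] [Countable C] (h : ¬ Scattered C) :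
    sib C = 2 ^ Cardinal.aleph0 := by
  classical
  obtain ⟨eQC⟩ : Nonempty (ℚ ↪o C) := not_isEmpty_iff.mp h
  obtain ⟨eCQ⟩ : Nonempty (C ↪o ℚ) := Order.embedding_from_countable_to_dense C ℚ
  set R : {S : Set C // Nonempty (C ↪o ↥S)} → {S : Set C // Nonempty (C ↪o ↥S)} → Prop :=
    fun S T => Nonempty (↥S.1 ≃o ↥T.1) with hR
  have hequiv : Equivalence R :=
    ⟨fun S => ⟨OrderIso.refl _⟩, fun ⟨e⟩ => ⟨e.symm⟩, fun ⟨e⟩ ⟨e'⟩ => ⟨e.trans e'⟩⟩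
  have hle : sib C ≤ 2 ^ Cardinal.aleph0 := by
    refine le_trans Cardinal.mk_quot_le ?_
    refine le_trans (Cardinal.mk_subtype_le _) ?_
    rw [Cardinal.mk_set]
    exact Cardinal.power_le_power_left two_ne_zero Cardinal.mk_le_aleph0
  have hge : 2 ^ Cardinal.aleph0 ≤ sib C := by
    -- for each `A : Set ℕ`, an order embedding of `L A` into `C`
    have hLC : ∀ A : Set ℕ, Nonempty (sibAux.L A ↪o ℚ) :=
      fun A => Order.embedding_from_countable_to_dense (sibAux.L A) ℚ
    let j : (A : Set ℕ) → sibAux.L A ↪o C := fun A => ((hLC A).some).trans eQC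
    let T : Set ℕ → Set C := fun A => Set.range (j A)
    let iso : (A : Set ℕ) → sibAux.L A ≃o ↥(T A) := fun A => OrderEmbedding.orderIso
    let emb : (A : Set ℕ) → C ↪o ↥(T A) := fun A =>
      (eCQ.trans (sibAux.qEmb A)).trans (iso A).toOrderEmbedding
    let F : ULift.{u} (Set ℕ) → Quot R := fun A => Quot.mk R ⟨T A.down, ⟨emb A.down⟩⟩
    have hFinj : Function.Injective F := by
      intro A B hAB
      have : Nonempty (↥(T A.down) ≃o ↥(T B.down)) :=
        hequiv.eqvGen_iff.mp (Quot.eq.mp hAB)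
      obtain ⟨e⟩ := this
      have eLL : sibAux.L A.down ≃o sibAux.L B.down :=
        ((iso A.down).trans e).trans (iso B.down).symm
      have hset : A.down = B.down := by
        ext n
        rw [← sibAux.P_iff (A := A.down), ← sibAux.P_iff (A := B.down)]
        exact ⟨fun hp => sibAux.P_of_orderIso eLL hp,
          fun hp => sibAux.P_of_orderIso eLL.symm hp⟩
      cases A; cases B; simpa using hset
    have := Cardinal.mk_le_of_injective hFinj
    rw [Cardinal.mk_uLift, Cardinal.mk_set, Cardinal.mk_nat,
      Cardinal.two_power_aleph0, Cardinal.lift_continuum, ← Cardinal.two_power_aleph0] at this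
    exact this
  exact le_antisymm hle hge
end

section
/- Let (λ_n)_{n<ω} be a sequence of infinite ordinals whose cardinalities are strictly increasing (|λ_n| < |λ_{n+1}| for all n), and let C = Σ_{n<ω} λ_n* be the lexicographic sum over ℕ of the order duals toType(λ_n)ᵒᵈ (the copy indexed by n placed below the copy indexed by n+1). Then sib(C) ≥ max{2^ℵ₀, sup_n |λ_n|}. -/
universe u v

open Ordinal Set Cardinal

namespace SibAux

variable {X Y : Type u} [LinearOrder X] [LinearOrder Y]

/-- Restrict an order isomorphism to an initial segment. -/
def iioCongr (f : X ≃o Y) (x : X) : (Iio x : Set X) ≃o (Iio (f x) : Set Y) where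
  toFun a := ⟨f a.1, f.lt_iff_lt.2 a.2⟩
  invFun b := ⟨f.symm b.1, by
    have := f.symm.lt_iff_lt.2 b.2
    simpa using this⟩
  left_inv a := by ext; simp
  right_inv b := by ext; simp
  map_rel_iff' := by intro a b; simp [Subtype.coe_le_coe, ← Subtype.coe_le_coe]

def undual {A B : Type*} [LinearOrder A] [LinearOrder B] (f : Aᵒᵈ ≃o Bᵒᵈ) : A ≃o B where
  toFun a := OrderDual.ofDual (f (OrderDual.toDual a))
  invFun b := OrderDual.ofDual (f.symm (OrderDual.toDual b))
  left_inv a := by simp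
  right_inv b := by simp
  map_rel_iff' := by intro a b; exact f.le_iff_le

theorem toType_eq_of_iso {γ δ : Ordinal.{u}} (f : γ.ToType ≃o δ.ToType) : γ = δ := by
  rw [← type_toType γ, ← type_toType δ]
  exact Quotient.sound ⟨⟨f.toEquiv, f.lt_iff_lt⟩⟩

def cardInv (X : Type u) [LinearOrder X] : Set Cardinal.{u} := { c | ∃ x : X, #(Iio x) = c }

theorem cardInv_eq_of_iso (f : X ≃o Y) : cardInv X = cardInv Y := by
  ext c
  constructor
  · rintro ⟨x, rfl⟩
    exact ⟨f x, (Cardinal.mk_congr (iioCongr f x).toEquiv).symm⟩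
  · rintro ⟨y, rfl⟩
    refine ⟨f.symm y, ?_⟩
    have := Cardinal.mk_congr (iioCongr f (f.symm y)).toEquiv
    simpa using this

def ordInv (κ : Cardinal.{u}) (X : Type u) [LinearOrder X] : Set Ordinal.{u} :=
  { γ | γ.card ≤ κ ∧ ∃ x : X, Nonempty ((Iio x : Set X) ≃o (γ.ToType)ᵒᵈ) }

theorem ordInv_eq_of_iso (κ : Cardinal.{u}) (f : X ≃o Y) : ordInv κ X = ordInv κ Y := by
  ext γ
  constructor
  · rintro ⟨hc, x, ⟨g⟩⟩
    exact ⟨hc, f x, ⟨(iioCongr f x).symm.trans g⟩⟩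
  · rintro ⟨hc, y, ⟨g⟩⟩
    refine ⟨hc, f.symm y, ⟨?_⟩⟩
    have e := iioCongr f (f.symm y)
    rw [f.apply_symm_apply] at e
    exact e.trans g

theorem le_sib_of {C : Type u} [LinearOrder C] {ι : Type u} {β : Type v}
    (F : ι → Set C) (hemb : ∀ i, Nonempty (C ↪o ↥(F i)))
    (G : Set C → β)
    (hG : ∀ S T : Set C, Nonempty (↥S ≃o ↥T) → G S = G T)
    (hinj : Function.Injective fun i => G (F i)) :
    Cardinal.mk ι ≤ sib C := by
  have key : Function.Injective
      (fun i => Quot.mk _ (⟨F i, hemb i⟩ : {S : Set C // Nonempty (C ↪o ↥S)}) :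
        ι → Quot fun S T : {S : Set C // Nonempty (C ↪o ↥S)} => Nonempty (↥S.1 ≃o ↥T.1)) := by
    intro i j h
    apply hinj
    have := congrArg (Quot.lift (fun S : {S : Set C // Nonempty (C ↪o ↥S)} => G S.1)
      (fun a b hab => hG a.1 b.1 hab)) h
    simpa using this
  exact Cardinal.mk_le_of_injective key

noncomputable def rk {o : Ordinal.{u}} (t : o.ToType) : Ordinal.{u} :=
  ((Ordinal.ToType.mk (o := o)).symm t).1

theorem rk_lt {o : Ordinal.{u}} (t : o.ToType) : rk t < o := ((Ordinal.ToType.mk (o := o)).symm t).2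

theorem rk_lt_rk {o : Ordinal.{u}} {t t' : o.ToType} : rk t < rk t' ↔ t < t' := by
  rw [rk, rk, Subtype.coe_lt_coe, OrderIso.lt_iff_lt]

theorem rk_inj {o : Ordinal.{u}} {t t' : o.ToType} (h : rk t = rk t') : t = t' := by
  have : (Ordinal.ToType.mk (o := o)).symm t = (Ordinal.ToType.mk (o := o)).symm t' := Subtype.ext h
  simpa using congrArg (Ordinal.ToType.mk (o := o)) this

noncomputable def el (o : Ordinal.{u}) (β : Ordinal.{u}) (h : β < o) : o.ToType :=
  Ordinal.ToType.mk ⟨β, h⟩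

@[simp] theorem rk_el {o β : Ordinal.{u}} (h : β < o) : rk (el o β h) = β := by
  simp [rk, el]

theorem el_rk {o : Ordinal.{u}} (t : o.ToType) : el o (rk t) (rk_lt t) = t := by
  simp [rk, el]

theorem el_lt_el {o β β' : Ordinal.{u}} (h : β < o) (h' : β' < o) :
    el o β h < el o β' h' ↔ β < β' := by
  rw [el, el, OrderIso.lt_iff_lt]; exact Iff.rfl

end SibAux

namespace SibAux

variable (lam : ℕ → Ordinal.{u})

abbrev CL := Σₗ (n : ℕ), ((lam n).ToType)ᵒᵈ

def blkIdx (p : CL lam) : ℕ := (ofLex p).1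

noncomputable def blkRk (p : CL lam) : Ordinal.{u} := rk (OrderDual.ofDual (ofLex p).2)

theorem blkRk_lt (p : CL lam) : blkRk lam p < lam (blkIdx lam p) :=
  rk_lt _

def SS (d : ℕ → Ordinal.{u}) : Set (CL lam) := { p | blkRk lam p < d (blkIdx lam p) }

noncomputable def mkE (n : ℕ) (β : Ordinal.{u}) (h : β < lam n) : CL lam :=
  toLex ⟨n, OrderDual.toDual (el (lam n) β h)⟩

@[simp] theorem blkIdx_mkE {n β h} : blkIdx lam (mkE lam n β h) = n := rfl

@[simp] theorem blkRk_mkE {n β h} : blkRk lam (mkE lam n β h) = β := by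
  show rk (el (lam n) β h) = β; exact rk_el h

theorem exists_eq_mkE (p : CL lam) :
    p = mkE lam (blkIdx lam p) (blkRk lam p) (blkRk_lt lam p) := by
  show p = toLex ⟨(ofLex p).1, OrderDual.toDual (el _ (rk (OrderDual.ofDual (ofLex p).2)) _)⟩
  rw [el_rk]
  rfl

theorem lt_left {p q : CL lam} (h : blkIdx lam p < blkIdx lam q) : p < q :=
  Sigma.Lex.lt_def.mpr (Or.inl h)

theorem mkE_lt_mkE {n : ℕ} {β β' : Ordinal.{u}} {h h'} :
    mkE lam n β h < mkE lam n β' h' ↔ β' < β := by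
  rw [Sigma.Lex.lt_def]
  constructor
  · rintro (h1 | ⟨h1, h2⟩)
    · exact absurd h1 (lt_irrefl n)
    · have h2' : OrderDual.toDual (el (lam n) β h) < OrderDual.toDual (el (lam n) β' h') := h2
      rw [OrderDual.toDual_lt_toDual, el_lt_el] at h2'
      exact h2'
  · intro hb
    refine Or.inr ⟨rfl, ?_⟩
    show OrderDual.toDual (el (lam n) β h) < OrderDual.toDual (el (lam n) β' h')
    rw [OrderDual.toDual_lt_toDual, el_lt_el]
    exact hb

theorem lt_cases {p q : CL lam} (h : p < q) :
    blkIdx lam p < blkIdx lam q ∨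
      (blkIdx lam p = blkIdx lam q ∧ blkRk lam q < blkRk lam p) := by
  obtain ⟨i, a⟩ := p
  obtain ⟨j, b⟩ := q
  rcases Sigma.Lex.lt_def.1 h with h1 | ⟨h1, h2⟩
  · exact Or.inl h1
  · have h1' : i = j := h1
    subst h1'
    refine Or.inr ⟨rfl, ?_⟩
    have h2' : a < b := h2
    exact rk_lt_rk.2 h2'

theorem mkE_congr {n n' : ℕ} (e : n = n') {β : Ordinal.{u}} {h : β < lam n} :
    mkE lam n β h = mkE lam n' β (e ▸ h) := by subst e; rfl

theorem emb_SS (d : ℕ → Ordinal.{u}) (σ : ℕ → ℕ) (hσ : StrictMono σ)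
    (h1 : ∀ k, lam k ≤ d (σ k)) (h2 : ∀ k, d (σ k) ≤ lam (σ k)) :
    Nonempty (CL lam ↪o ↥(SS lam d)) := by
  have hlt : ∀ p : CL lam, blkRk lam p < lam (σ (blkIdx lam p)) := fun p =>
    lt_of_lt_of_le (blkRk_lt lam p) (le_trans (h1 _) (h2 _))
  have hmem : ∀ p : CL lam, mkE lam (σ (blkIdx lam p)) (blkRk lam p) (hlt p) ∈ SS lam d := by
    intro p
    show blkRk lam _ < d (blkIdx lam _)
    simpa using lt_of_lt_of_le (blkRk_lt lam p) (h1 _)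
  refine ⟨OrderEmbedding.ofStrictMono
    (fun p => ⟨mkE lam (σ (blkIdx lam p)) (blkRk lam p) (hlt p), hmem p⟩) ?_⟩
  intro p q hpq
  rw [Subtype.mk_lt_mk]
  rcases lt_cases lam hpq with hij | ⟨hij, hr⟩
  · exact lt_left lam (by simpa using hσ hij)
  · have e : σ (blkIdx lam p) = σ (blkIdx lam q) := by rw [hij]
    rw [mkE_congr lam e]
    exact (mkE_lt_mkE lam).2 hr

end SibAux

namespace SibAux

variable (lam : ℕ → Ordinal.{u})

theorem el_inj {o β β' : Ordinal.{u}} {h : β < o} {h' : β' < o} (e : el o β h = el o β' h') :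
    β = β' := by
  rw [← rk_el h, ← rk_el h', e]

theorem succ_le_mk_iio {d : ℕ → Ordinal.{u}} {m : ℕ} {c : Cardinal.{u}} (hc : ℵ₀ ≤ c)
    (hdm : d m = (Order.succ c).ord) (hdlam : d m ≤ lam m)
    (x : ↥(SS lam d)) (hx : blkIdx lam x.1 = m) :
    Order.succ c ≤ #(Iio x : Set ↥(SS lam d)) := by
  have hρ : blkRk lam x.1 < (Order.succ c).ord := by rw [← hdm, ← hx]; exact x.2
  set ρ := blkRk lam x.1 with hρdef
  set T : Set ((Order.succ c).ord).ToType := { t | ρ < rk t } with hT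
  have hcompl : #(↥Tᶜ) ≤ c := by
    have hinj : Function.Injective (fun t : ↥Tᶜ =>
        el (Order.succ ρ) (rk t.1) (Order.lt_succ_iff.2 (not_lt.1 t.2))) := by
      intro t t' e
      exact Subtype.ext (rk_inj (el_inj e))
    calc #(↥Tᶜ) ≤ #((Order.succ ρ).ToType) := Cardinal.mk_le_of_injective hinj
      _ = (Order.succ ρ).card := mk_toType _
      _ = ρ.card + 1 := Ordinal.card_succ ρ
      _ ≤ c + 1 := by
          have : ρ.card ≤ c := Order.lt_succ_iff.1 (Cardinal.lt_ord.1 hρ)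
          exact add_le_add_left this 1
      _ = c := Cardinal.add_one_of_aleph0_le hc
  have htot : #(↥T) + #(↥Tᶜ) = Order.succ c := by
    rw [Cardinal.mk_sum_compl, mk_toType, Cardinal.card_ord]
  have hTcard : Order.succ c ≤ #(↥T) := by
    by_contra h'
    have h1 : #(↥T) < Order.succ c := not_le.1 h'
    have h2 : #(↥Tᶜ) < Order.succ c := lt_of_le_of_lt hcompl (Order.lt_succ c)
    have := Cardinal.add_lt_of_lt (hc.trans (Order.lt_succ c).le) h1 h2
    rw [htot] at this
    exact lt_irrefl _ this
  have hlam : ∀ t : ↥T, rk t.1 < lam m := fun t => lt_of_lt_of_le (by rw [hdm] at hdlam ⊢; exact rk_lt t.1) hdlam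
  have hmem : ∀ t : ↥T, mkE lam m (rk t.1) (hlam t) ∈ SS lam d := by
    intro t
    show blkRk lam _ < d (blkIdx lam _)
    simp only [blkRk_mkE, blkIdx_mkE, hdm]
    exact rk_lt t.1
  have hltx : ∀ t : ↥T, (⟨mkE lam m (rk t.1) (hlam t), hmem t⟩ : ↥(SS lam d)) < x := by
    intro t
    rw [Subtype.mk_lt_mk]
    conv_rhs => rw [exists_eq_mkE lam x.1, mkE_congr lam hx]
    exact (mkE_lt_mkE lam).2 t.2
  have hinj2 : Function.Injective (fun t : ↥T =>
      (⟨⟨mkE lam m (rk t.1) (hlam t), hmem t⟩, hltx t⟩ : (Iio x : Set ↥(SS lam d)))) := by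
    intro t t' e
    have e1 : mkE lam m (rk t.1) (hlam t) = mkE lam m (rk t'.1) (hlam t') := by
      have := congrArg (fun z => z.1.1) e
      exact this
    have e2 : rk t.1 = rk t'.1 := by
      have := congrArg (blkRk lam) e1
      simpa using this
    exact Subtype.ext (rk_inj e2)
  exact hTcard.trans (Cardinal.mk_le_of_injective hinj2)

theorem mk_iio_le {d : ℕ → Ordinal.{u}} {m : ℕ} {c : Cardinal.{u}} (hc : ℵ₀ ≤ c)
    (hd : ∀ j, j ≤ m → (d j).card ≤ c)
    (x : ↥(SS lam d)) (hx : blkIdx lam x.1 = m) :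
    #(Iio x : Set ↥(SS lam d)) ≤ c := by
  classical
  set D : Ordinal.{u} := (Finset.range (m + 1)).sup d with hD
  have hdD : ∀ j, j ≤ m → d j ≤ D := fun j hj =>
    Finset.le_sup (Finset.mem_range.2 (Nat.lt_succ_of_le hj))
  have hDcard : D.card ≤ c := by
    obtain ⟨j, hjmem, hje⟩ := Finset.exists_mem_eq_sup (Finset.range (m + 1))
      ⟨0, Finset.mem_range.2 (Nat.succ_pos m)⟩ d
    rw [hD, hje]
    exact hd j (Nat.lt_succ_iff.1 (Finset.mem_range.1 hjmem))
  have key : ∀ y : ↥(SS lam d), y < x → blkIdx lam y.1 ≤ m := by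
    intro y hy
    rcases lt_cases lam (Subtype.coe_lt_coe.2 hy) with h | ⟨h, _⟩
    · rw [hx] at h; exact h.le
    · rw [hx] at h; exact h.le
  have hrkD : ∀ y : ↥(SS lam d), y < x → blkRk lam y.1 < D := by
    intro y hy
    exact lt_of_lt_of_le y.2 (hdD _ (key y hy))
  have hinj : Function.Injective (fun y : (Iio x : Set ↥(SS lam d)) =>
      ((ULift.up ⟨blkIdx lam y.1.1, Nat.lt_succ_of_le (key y.1 y.2)⟩ : ULift.{u} (Fin (m + 1))),
        el D (blkRk lam y.1.1) (hrkD y.1 y.2))) := by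
    intro y y' e
    have e1 : blkIdx lam y.1.1 = blkIdx lam y'.1.1 := by
      have := congrArg (fun z => (Prod.fst z).down.1) e
      exact this
    have e2 : blkRk lam y.1.1 = blkRk lam y'.1.1 := by
      have := congrArg Prod.snd e
      exact el_inj this
    apply Subtype.ext
    apply Subtype.ext
    rw [exists_eq_mkE lam y.1.1, exists_eq_mkE lam y'.1.1]
    rw [mkE_congr lam e1]
    congr 1
  calc #(Iio x : Set ↥(SS lam d)) ≤ #(ULift.{u} (Fin (m + 1)) × D.ToType) :=
        Cardinal.mk_le_of_injective hinj
    _ = (m + 1 : ℕ) * D.card := by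
        rw [Cardinal.mk_prod]
        simp [mk_toType]
    _ ≤ c := by
        refine le_trans (Cardinal.mul_le_max _ _) ?_
        refine max_le (max_le ?_ hDcard) hc
        exact le_trans (Cardinal.nat_lt_aleph0 (m+1)).le hc

end SibAux

namespace SibAux

variable (lam : ℕ → Ordinal.{u})

theorem lt_add_one_self (ρ : Ordinal.{u}) : ρ < ρ + 1 := by
  rw [Ordinal.add_one_eq_succ]; exact Order.lt_succ ρ

theorem iio_iso {d : ℕ → Ordinal.{u}} {n : ℕ} {α : Ordinal.{u}}
    (hd0 : ∀ j, j ≤ n → d j = 0) (hdn : d (n + 1) = α) (hα : α ≤ lam (n + 1))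
    (x : ↥(SS lam d)) (hx : blkIdx lam x.1 = n + 1) :
    Nonempty ((Iio x : Set ↥(SS lam d)) ≃o ((α - (blkRk lam x.1 + 1)).ToType)ᵒᵈ) := by
  set ρ := blkRk lam x.1 with hρdef
  have hρ : ρ < α := by rw [← hdn, ← hx]; exact x.2
  have hρ1 : ρ + 1 ≤ α := by
    rw [Ordinal.add_one_eq_succ]; exact Order.succ_le_iff.2 hρ
  set γ : Ordinal.{u} := α - (ρ + 1) with hγdef
  have hsum : (ρ + 1) + γ = α := Ordinal.add_sub_cancel_of_le hρ1
  have hβα : ∀ t : γ.ToType, (ρ + 1) + rk t < α := by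
    intro t
    calc (ρ + 1) + rk t < (ρ + 1) + γ := by
          exact (add_lt_add_iff_left (ρ + 1)).2 (rk_lt t)
      _ = α := hsum
  have hβlam : ∀ t : γ.ToType, (ρ + 1) + rk t < lam (n + 1) := fun t =>
    lt_of_lt_of_le (hβα t) hα
  have hmem : ∀ t : γ.ToType, mkE lam (n + 1) ((ρ + 1) + rk t) (hβlam t) ∈ SS lam d := by
    intro t
    show blkRk lam _ < d (blkIdx lam _)
    simp only [blkRk_mkE, blkIdx_mkE, hdn]
    exact hβα t
  have hltx : ∀ t : γ.ToType,
      (⟨mkE lam (n + 1) ((ρ + 1) + rk t) (hβlam t), hmem t⟩ : ↥(SS lam d)) < x := by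
    intro t
    rw [Subtype.mk_lt_mk]
    conv_rhs => rw [exists_eq_mkE lam x.1, mkE_congr lam hx]
    refine (mkE_lt_mkE lam).2 ?_
    exact lt_of_lt_of_le (lt_add_one_self ρ) le_self_add
  set g : (γ.ToType)ᵒᵈ → (Iio x : Set ↥(SS lam d)) := fun s =>
    ⟨⟨mkE lam (n + 1) ((ρ + 1) + rk (OrderDual.ofDual s)) (hβlam _), hmem _⟩, hltx _⟩ with hg
  have hmono : StrictMono g := by
    intro s s' hss
    have h1 : rk (OrderDual.ofDual s') < rk (OrderDual.ofDual s) := rk_lt_rk.2 hss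
    have h2 : (ρ + 1) + rk (OrderDual.ofDual s') < (ρ + 1) + rk (OrderDual.ofDual s) :=
      (add_lt_add_iff_left (ρ + 1)).2 h1
    rw [hg]
    show mkE lam (n + 1) _ _ < mkE lam (n + 1) _ _
    exact (mkE_lt_mkE lam).2 h2
  have hsurj : Function.Surjective g := by
    intro y
    have hpS : blkRk lam y.1.1 < d (blkIdx lam y.1.1) := y.1.2
    have hjge : ¬ blkIdx lam y.1.1 ≤ n := by
      intro hle
      rw [hd0 _ hle] at hpS
      exact not_lt_zero hpS
    have hcase := lt_cases lam (Subtype.coe_lt_coe.2 y.2)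
    rw [hx] at hcase
    rcases hcase with h | ⟨hj, hρp⟩
    · exact absurd (Nat.lt_succ_iff.1 h) hjge
    · have hrkα : blkRk lam y.1.1 < α := by rw [← hdn, ← hj]; exact hpS
      have hρ1p : ρ + 1 ≤ blkRk lam y.1.1 := by
        rw [Ordinal.add_one_eq_succ]; exact Order.succ_le_iff.2 hρp
      have hδ : blkRk lam y.1.1 - (ρ + 1) < γ := by
        have e1 : (ρ + 1) + (blkRk lam y.1.1 - (ρ + 1)) = blkRk lam y.1.1 :=
          Ordinal.add_sub_cancel_of_le hρ1p
        rw [← add_lt_add_iff_left (ρ + 1), e1, hsum]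
        exact hrkα
      refine ⟨OrderDual.toDual (el γ (blkRk lam y.1.1 - (ρ + 1)) hδ), ?_⟩
      rw [hg]
      apply Subtype.ext
      apply Subtype.ext
      show mkE lam (n + 1) ((ρ + 1) + rk (el γ _ hδ)) _ = y.1.1
      conv_rhs => rw [exists_eq_mkE lam y.1.1, mkE_congr lam hj]
      have : (ρ + 1) + rk (el γ (blkRk lam y.1.1 - (ρ + 1)) hδ) = blkRk lam y.1.1 := by
        rw [rk_el]
        exact Ordinal.add_sub_cancel_of_le hρ1p
      congr 1
  exact ⟨(StrictMono.orderIsoOfSurjective g hmono hsurj).symm⟩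

end SibAux

namespace SibAux

variable (lam : ℕ → Ordinal.{u})

noncomputable def μ (m : ℕ) : Ordinal.{u} := (Order.succ (lam m).card).ord

theorem lam_lt_mu (m : ℕ) : lam m < μ lam m := Cardinal.lt_ord.2 (Order.lt_succ _)

theorem mu_mono (hcard : ∀ n, (lam n).card < (lam (n + 1)).card) {a b : ℕ} (h : a ≤ b) :
    μ lam a ≤ μ lam b :=
  Cardinal.ord_le_ord.2 (Order.succ_le_succ ((strictMono_nat_of_lt_succ hcard).monotone h))

theorem mu_le_lam (hcard : ∀ n, (lam n).card < (lam (n + 1)).card) {a b : ℕ} (h : a < b) :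
    μ lam a ≤ lam b :=
  Cardinal.ord_le.2 (Order.succ_le_iff.2 ((strictMono_nat_of_lt_succ hcard) h))

theorem mu_pos (m : ℕ) : 0 < μ lam m :=
  Cardinal.lt_ord.2 (by rw [Ordinal.card_zero]; exact lt_of_le_of_lt zero_le (Order.lt_succ _))

theorem mu_card (m : ℕ) : (μ lam m).card = Order.succ (lam m).card := Cardinal.card_ord _

theorem succ_k_strictMono (hcard : ∀ n, (lam n).card < (lam (n + 1)).card) :
    StrictMono fun m => Order.succ (lam m).card := fun a b h =>
  (Order.succ_le_iff.2 ((strictMono_nat_of_lt_succ hcard) h)).trans_lt (Order.lt_succ _)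

theorem part1 (hinf : ∀ n, Ordinal.omega0 ≤ lam n)
    (hcard : ∀ n, (lam n).card < (lam (n + 1)).card) :
    (2 : Cardinal.{u}) ^ (Cardinal.aleph0 : Cardinal.{u}) ≤ sib (CL lam) := by
  classical
  set dI : Set (ULift.{u, 0} ℕ) → ℕ → Ordinal.{u} := fun A m =>
    if m ≠ 0 ∧ ((m - 1) % 2 = 0 ∨ ULift.up ((m - 2) / 2) ∈ A) then μ lam (m - 1) else 0 with hdI
  have shape : ∀ A m, dI A m = 0 ∨ (m ≠ 0 ∧ dI A m = μ lam (m - 1)) := by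
    intro A m
    by_cases h : m ≠ 0 ∧ ((m - 1) % 2 = 0 ∨ ULift.up ((m - 2) / 2) ∈ A)
    · exact Or.inr ⟨h.1, if_pos h⟩
    · exact Or.inl (if_neg h)
  have hodd : ∀ A k, dI A (2 * k + 1) = μ lam (2 * k) := by
    intro A k
    have h1 : dI A (2 * k + 1) = μ lam (2 * k + 1 - 1) := if_pos ⟨by omega, Or.inl (by omega)⟩
    rw [h1]
    congr 1
  have heven : ∀ A i, (dI A (2 * i + 2) ≠ 0 ↔ ULift.up.{u, 0} i ∈ A) := by
    intro A i
    constructor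
    · intro hne
      by_contra hmem
      exact hne (if_neg (by
        rintro ⟨-, h2 | h3⟩
        · omega
        · have : (2 * i + 2 - 2) / 2 = i := by omega
          rw [this] at h3
          exact hmem h3))
    · intro hmem
      have hcnd : (2 * i + 2 ≠ 0) ∧ ((2 * i + 2 - 1) % 2 = 0 ∨ ULift.up.{u, 0} ((2 * i + 2 - 2) / 2) ∈ A) := by
        refine ⟨by omega, Or.inr ?_⟩
        have h : (2 * i + 2 - 2) / 2 = i := by omega
        rw [h]
        exact hmem
      have : dI A (2 * i + 2) = μ lam (2 * i + 2 - 1) := if_pos hcnd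
      rw [this]
      exact (mu_pos lam _).ne'
  have hemb : ∀ A, Nonempty (CL lam ↪o ↥(SS lam (dI A))) := by
    intro A
    refine emb_SS lam _ (fun k => 2 * k + 1) (fun a b h => by show 2 * a + 1 < 2 * b + 1; omega) ?_ ?_
    · intro k
      show lam k ≤ dI A (2 * k + 1)
      rw [hodd]
      exact le_trans (lam_lt_mu lam k).le (mu_mono lam hcard (by omega))
    · intro k
      show dI A (2 * k + 1) ≤ lam (2 * k + 1)
      rw [hodd]
      exact mu_le_lam lam hcard (by omega)
  have hval : ∀ A (x : ↥(SS lam (dI A))),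
      #(Iio x : Set ↥(SS lam (dI A))) = Order.succ ((lam (blkIdx lam x.1 - 1)).card) := by
    intro A x
    have hne : dI A (blkIdx lam x.1) ≠ 0 := by
      intro h0
      have h1 : blkRk lam x.1 < dI A (blkIdx lam x.1) := x.2
      rw [h0] at h1
      exact not_lt_zero h1
    rcases shape A (blkIdx lam x.1) with h | ⟨hm0, hm⟩
    · exact absurd h hne
    apply le_antisymm
    · refine mk_iio_le lam ?_ ?_ x rfl
      · exact le_trans (Ordinal.aleph0_le_card.2 (hinf _)) (Order.le_succ _)
      · intro j hj
        rcases shape A j with h0 | ⟨hj0, hjμ⟩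
        · rw [h0, Ordinal.card_zero]; exact zero_le
        · rw [hjμ, mu_card]
          exact ((succ_k_strictMono lam hcard).monotone (by omega))
    · exact succ_le_mk_iio lam (Ordinal.aleph0_le_card.2 (hinf _)) hm
        (hm ▸ mu_le_lam lam hcard (by omega)) x rfl
  have hcardInv : ∀ A, cardInv ↥(SS lam (dI A)) =
      {c : Cardinal.{u} | ∃ m : ℕ, dI A m ≠ 0 ∧ c = Order.succ ((lam (m - 1)).card)} := by
    intro A
    ext c
    constructor
    · rintro ⟨x, rfl⟩
      refine ⟨blkIdx lam x.1, ?_, hval A x⟩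
      intro h0
      have h1 : blkRk lam x.1 < dI A (blkIdx lam x.1) := x.2
      rw [h0] at h1
      exact not_lt_zero h1
    · rintro ⟨m, hne, rfl⟩
      rcases shape A m with h | ⟨hm0, hm⟩
      · exact absurd h hne
      have h0lam : (0 : Ordinal.{u}) < lam m := Ordinal.omega0_pos.trans_le (hinf m)
      have hmem : mkE lam m 0 h0lam ∈ SS lam (dI A) := by
        show blkRk lam _ < dI A (blkIdx lam _)
        simp only [blkRk_mkE, blkIdx_mkE, hm]
        exact mu_pos lam _
      refine ⟨⟨mkE lam m 0 h0lam, hmem⟩, ?_⟩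
      rw [hval A ⟨mkE lam m 0 h0lam, hmem⟩]
      rfl
  have hinj : Function.Injective fun A => cardInv ↥(SS lam (dI A)) := by
    intro A B hAB0
    have hAB : cardInv ↥(SS lam (dI A)) = cardInv ↥(SS lam (dI B)) := hAB0
    rw [hcardInv A, hcardInv B] at hAB
    ext a
    obtain ⟨i⟩ := a
    have key : ∀ (X Y : Set (ULift.{u, 0} ℕ)),
        ({c : Cardinal.{u} | ∃ m : ℕ, dI X m ≠ 0 ∧ c = Order.succ ((lam (m - 1)).card)} =
          {c : Cardinal.{u} | ∃ m : ℕ, dI Y m ≠ 0 ∧ c = Order.succ ((lam (m - 1)).card)}) →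
        ULift.up.{u, 0} i ∈ X → ULift.up.{u, 0} i ∈ Y := by
      intro X Y hXY hmem
      have h1 : Order.succ ((lam (2 * i + 1)).card) ∈
          {c : Cardinal.{u} | ∃ m : ℕ, dI X m ≠ 0 ∧ c = Order.succ ((lam (m - 1)).card)} :=
        ⟨2 * i + 2, (heven X i).2 hmem, by congr 1⟩
      rw [hXY] at h1
      obtain ⟨m', hne', he'⟩ := h1
      have hm'0 : m' ≠ 0 := by
        rcases shape Y m' with h | ⟨h, -⟩
        · exact absurd h hne'
        · exact h
      have : 2 * i + 1 = m' - 1 := (succ_k_strictMono lam hcard).injective he'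
      have hm' : m' = 2 * i + 2 := by omega
      rw [hm'] at hne'
      exact (heven Y i).1 hne'
    exact ⟨key A B hAB, key B A hAB.symm⟩
  have hle := le_sib_of (C := CL lam) (fun A => SS lam (dI A)) hemb
    (fun S => cardInv ↥S) (fun S T h => h.elim fun f => cardInv_eq_of_iso f) hinj
  rwa [Cardinal.mk_set, Cardinal.mk_uLift, Cardinal.mk_nat, Cardinal.lift_aleph0] at hle

end SibAux

namespace SibAux

variable (lam : ℕ → Ordinal.{u})

theorem part2 (hinf : ∀ n, Ordinal.omega0 ≤ lam n)
    (hcard : ∀ n, (lam n).card < (lam (n + 1)).card) (n : ℕ) :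
    (lam n).card ≤ sib (CL lam) := by
  have hκn : ℵ₀ ≤ (lam n).card := Ordinal.aleph0_le_card.2 (hinf n)
  set ι : Type u := ((lam n).card.ord).ToType with hι
  set αo : ι → Ordinal.{u} := fun ξ => ω * (1 + rk ξ) with hαo
  have hαinf : ∀ ξ, ω ≤ αo ξ := by
    intro ξ
    show ω ≤ ω * (1 + rk ξ)
    calc ω = ω * 1 := (mul_one ω).symm
      _ ≤ ω * (1 + rk ξ) := mul_le_mul_right le_self_add ω
  have hα0 : ∀ ξ, 0 < αo ξ := fun ξ => Ordinal.omega0_pos.trans_le (hαinf ξ)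
  have hαcard : ∀ ξ, (αo ξ).card ≤ (lam n).card := by
    intro ξ
    have h1 : (rk ξ).card < (lam n).card := Cardinal.lt_ord.1 (rk_lt ξ)
    show (ω * (1 + rk ξ)).card ≤ (lam n).card
    rw [Ordinal.card_mul, Ordinal.card_add, Ordinal.card_omega0, Ordinal.card_one]
    refine le_trans (Cardinal.mul_le_max _ _) ?_
    refine max_le (max_le hκn ?_) hκn
    calc (1 : Cardinal.{u}) + (rk ξ).card ≤ (lam n).card + (lam n).card :=
          add_le_add (le_trans (le_of_lt Cardinal.one_lt_aleph0) hκn) h1.le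
      _ = (lam n).card := Cardinal.add_eq_self hκn
  have hαlam : ∀ ξ, αo ξ ≤ lam (n + 1) := fun ξ =>
    le_trans (Cardinal.lt_ord.2 ((hαcard ξ).trans_lt (hcard n))).le (Cardinal.ord_le.2 le_rfl)
  set dII : ι → ℕ → Ordinal.{u} :=
    fun ξ m => if m = n + 1 then αo ξ else if m ≤ n then 0 else μ lam (m - 1) with hdII
  have hd_n1 : ∀ ξ, dII ξ (n + 1) = αo ξ := fun ξ => if_pos rfl
  have hd_le : ∀ ξ, ∀ j, j ≤ n → dII ξ j = 0 := by
    intro ξ j hj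
    show (if j = n + 1 then αo ξ else if j ≤ n then 0 else μ lam (j - 1)) = 0
    rw [if_neg (by omega), if_pos hj]
  have hd_gt : ∀ ξ m, n + 2 ≤ m → dII ξ m = μ lam (m - 1) := by
    intro ξ m hm
    show (if m = n + 1 then αo ξ else if m ≤ n then 0 else μ lam (m - 1)) = μ lam (m - 1)
    rw [if_neg (by omega), if_neg (by omega)]
  have hemb : ∀ ξ, Nonempty (CL lam ↪o ↥(SS lam (dII ξ))) := by
    intro ξ
    refine emb_SS lam _ (fun k => n + 2 + k) (fun a b h => by show n+2+a < n+2+b; omega) ?_ ?_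
    · intro k
      show lam k ≤ dII ξ (n + 2 + k)
      rw [hd_gt ξ _ (by omega)]
      have he : n + 2 + k - 1 = n + 1 + k := by omega
      rw [he]
      exact le_trans (lam_lt_mu lam k).le (mu_mono lam hcard (by omega))
    · intro k
      show dII ξ (n + 2 + k) ≤ lam (n + 2 + k)
      rw [hd_gt ξ _ (by omega)]
      exact mu_le_lam lam hcard (by omega)
  have hvalA : ∀ ξ, αo ξ ∈ ordInv (lam n).card ↥(SS lam (dII ξ)) := by
    intro ξ
    have h0lam : (0 : Ordinal.{u}) < lam (n + 1) := Ordinal.omega0_pos.trans_le (hinf _)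
    have hmem : mkE lam (n + 1) 0 h0lam ∈ SS lam (dII ξ) := by
      show blkRk lam _ < dII ξ (blkIdx lam _)
      simp only [blkRk_mkE, blkIdx_mkE, hd_n1]
      exact hα0 ξ
    obtain ⟨f⟩ := iio_iso lam (hd_le ξ) (hd_n1 ξ) (hαlam ξ)
      (⟨mkE lam (n + 1) 0 h0lam, hmem⟩ : ↥(SS lam (dII ξ))) rfl
    have hrk0 : blkRk lam (⟨mkE lam (n + 1) 0 h0lam, hmem⟩ : ↥(SS lam (dII ξ))).1 = 0 :=
      blkRk_mkE lam
    rw [hrk0, zero_add] at f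
    have hsub : αo ξ - 1 = αo ξ := by
      conv_lhs => rw [← Ordinal.one_add_of_omega0_le (hαinf ξ), Ordinal.add_sub_cancel]
    rw [hsub] at f
    exact ⟨hαcard ξ, ⟨mkE lam (n + 1) 0 h0lam, hmem⟩, ⟨f⟩⟩
  have hvalB : ∀ ξ γ, γ ∈ ordInv (lam n).card ↥(SS lam (dII ξ)) → γ ≤ αo ξ := by
    rintro ξ γ ⟨hγc, x, ⟨f⟩⟩
    rcases Nat.lt_trichotomy (blkIdx lam x.1) (n + 1) with hm | hm | hm
    · exfalso
      have h1 : blkRk lam x.1 < dII ξ (blkIdx lam x.1) := x.2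
      rw [hd_le ξ _ (by omega)] at h1
      exact not_lt_zero h1
    · obtain ⟨g⟩ := iio_iso lam (hd_le ξ) (hd_n1 ξ) (hαlam ξ) x hm
      have he : γ = αo ξ - (blkRk lam x.1 + 1) := toType_eq_of_iso (undual (f.symm.trans g))
      rw [he]
      exact Ordinal.sub_le_self _ _
    · exfalso
      have hsucc := succ_le_mk_iio lam (c := (lam (blkIdx lam x.1 - 1)).card)
        (Ordinal.aleph0_le_card.2 (hinf _))
        (by rw [hd_gt ξ _ (by omega)]; rfl)
        (by rw [hd_gt ξ _ (by omega)]
            exact mu_le_lam lam hcard (by omega))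
        x rfl
      have hcardIio : #(Iio x : Set ↥(SS lam (dII ξ))) = γ.card := by
        have e1 : #(Iio x : Set ↥(SS lam (dII ξ))) = #((γ.ToType)ᵒᵈ) :=
          Cardinal.mk_congr f.toEquiv
        rw [e1, ← mk_toType]
        exact Cardinal.mk_congr OrderDual.ofDual
      rw [hcardIio] at hsucc
      have h2 : (lam (blkIdx lam x.1 - 1)).card < (lam n).card :=
        lt_of_lt_of_le (Order.succ_le_iff.1 (hsucc.trans hγc)) le_rfl
      have h3 : (lam n).card ≤ (lam (blkIdx lam x.1 - 1)).card :=
        (strictMono_nat_of_lt_succ hcard).monotone (by omega)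
      exact absurd h2 (not_lt.2 h3)
  have hinj : Function.Injective fun ξ => ordInv (lam n).card ↥(SS lam (dII ξ)) := by
    intro ξ ξ' he0
    have he : ordInv (lam n).card ↥(SS lam (dII ξ)) = ordInv (lam n).card ↥(SS lam (dII ξ')) := he0
    have h1 : αo ξ ≤ αo ξ' := hvalB ξ' _ (he ▸ hvalA ξ)
    have h2 : αo ξ' ≤ αo ξ := hvalB ξ _ (he.symm ▸ hvalA ξ')
    have h3 : αo ξ = αo ξ' := le_antisymm h1 h2
    apply rk_inj (o := (lam n).card.ord)
    by_contra hne
    rcases lt_or_gt_of_ne hne with h | h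
    · have : αo ξ < αo ξ' := (mul_lt_mul_iff_right₀ Ordinal.omega0_pos).2
        ((add_lt_add_iff_left 1).2 h)
      exact absurd h3 this.ne
    · have : αo ξ' < αo ξ := (mul_lt_mul_iff_right₀ Ordinal.omega0_pos).2
        ((add_lt_add_iff_left 1).2 h)
      exact absurd h3.symm this.ne
  have hle := le_sib_of (C := CL lam) (fun ξ => SS lam (dII ξ)) hemb
    (fun S => ordInv (lam n).card ↥S) (fun S T h => h.elim fun f => ordInv_eq_of_iso _ f) hinj
  rwa [mk_toType, Cardinal.card_ord] at hle

end SibAux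

theorem sib_ge_of_sum_of_reverse_ordinals_of_increasing_card
    (lam : ℕ → Ordinal.{u}) (hinf : ∀ n, Ordinal.omega0 ≤ lam n)
    (hcard : ∀ n, (lam n).card < (lam (n + 1)).card) :
    max (2 ^ Cardinal.aleph0) (⨆ n, (lam n).card) ≤
      sib (Σₗ (n : ℕ), ((lam n).ToType)ᵒᵈ) := by
  refine max_le ?_ (ciSup_le fun n => ?_)
  · exact SibAux.part1 lam hinf hcard
  · exact SibAux.part2 lam hinf hcard n
end

section
/- For every chain C, the following are equivalent: (i) neither ℤ·ω nor ℤ·ω* embeds into C; (ii) C can be partitioned into finitely many intervals I_0 < I_1 < ... < I_{n-1} (each element of I_j below each element of I_k when j < k) such that each I_j with the induced order is a surordinal or a reverse surordinal. -/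
universe u

/-- A chain is a surordinal if every final segment `{y | x ≤ y}` is well-ordered. -/
def IsSurordinal (C : Type u) [LinearOrder C] : Prop :=
  ∀ x : C, Set.WellFoundedOn {y : C | x ≤ y} (· < ·)

namespace SurAux

open Set

variable {C : Type u} [LinearOrder C]

/-- A copy of `ℤ` inside a set. -/
def ZCopy (s : Set C) : Prop := ∃ f : ℤ → C, StrictMono f ∧ ∀ k, f k ∈ s

lemma ZCopy.mono {s t : Set C} (hst : s ⊆ t) (h : ZCopy s) : ZCopy t := by
  obtain ⟨f, hf, hm⟩ := h
  exact ⟨f, hf, fun k => hst (hm k)⟩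

/-- A copy of `ℤ` in the open interval `(a,b)`. -/
def Rz (a b : C) : Prop := ZCopy (Set.Ioo a b)

lemma Rz.lt {a b : C} (h : Rz a b) : a < b := by
  obtain ⟨f, _, hm⟩ := h
  exact lt_trans (hm 0).1 (hm 0).2

lemma toLex_lt_fst {α β : Type*} [LT α] [LT β] {a c : α} {b d : β} (h : a < c) :
    (toLex (a, b) : α ×ₗ β) < toLex (c, d) :=
  Prod.Lex.lt_iff.mpr (Or.inl h)

lemma toLex_lt_snd {α β : Type*} [LT α] [LT β] {a : α} {b d : β} (h : b < d) :
    (toLex (a, b) : α ×ₗ β) < toLex (a, d) :=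
  Prod.Lex.lt_iff.mpr (Or.inr ⟨rfl, h⟩)

/-- Assemble an embedding of `ℕ ×ₗ ℤ` from increasing stacked copies of `ℤ`. -/
lemma nat_lex_emb (f : ℕ → ℤ → C) (hm : ∀ m, StrictMono (f m))
    (hsep : ∀ m j j', f m j < f (m + 1) j') : Nonempty ((ℕ ×ₗ ℤ) ↪o C) := by
  have hsep' : ∀ {a b : ℕ}, a < b → ∀ j j', f a j < f b j' := by
    intro a b hab
    have hab' : a + 1 ≤ b := hab
    induction b, hab' using Nat.le_induction with
    | base => exact hsep a
    | succ n hn ih => exact fun j j' => lt_trans (ih (by omega) j 0) (hsep n 0 j')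
  refine ⟨OrderEmbedding.ofStrictMono (fun p => f (ofLex p).1 (ofLex p).2) ?_⟩
  intro p q hpq
  rcases Prod.Lex.lt_iff.mp hpq with h | ⟨h1, h2⟩
  · exact hsep' h _ _
  · show f (ofLex p).1 (ofLex p).2 < f (ofLex q).1 (ofLex q).2
    rw [h1]; exact hm _ h2

/-- Assemble an embedding of `ℕᵒᵈ ×ₗ ℤ` from decreasing stacked copies of `ℤ`. -/
lemma natod_lex_emb (f : ℕ → ℤ → C) (hm : ∀ m, StrictMono (f m))
    (hsep : ∀ m j j', f (m + 1) j < f m j') : Nonempty ((ℕᵒᵈ ×ₗ ℤ) ↪o C) := by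
  have hsep' : ∀ {a b : ℕ}, b < a → ∀ j j', f a j < f b j' := by
    intro a b hab
    have hab' : b + 1 ≤ a := hab
    induction a, hab' using Nat.le_induction with
    | base => exact hsep b
    | succ n hn ih => exact fun j j' => lt_trans (hsep n j 0) (ih (by omega) 0 j')
  refine ⟨OrderEmbedding.ofStrictMono
    (fun p => f (OrderDual.ofDual (ofLex p).1) (ofLex p).2) ?_⟩
  intro p q hpq
  rcases Prod.Lex.lt_iff.mp hpq with h | ⟨h1, h2⟩
  · exact hsep' h _ _
  · show f (OrderDual.ofDual (ofLex p).1) (ofLex p).2 <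
      f (OrderDual.ofDual (ofLex q).1) (ofLex q).2
    rw [h1]; exact hm _ h2

/-- Chains of stacked `ℤ`-copies inside a set. -/
def ChainIn (S : Set C) (m : ℕ) : Prop :=
  ∃ q : ℕ → C, (∀ i ≤ m, q i ∈ S) ∧ ∀ i < m, Rz (q i) (q (i + 1))

lemma chain_lt {q : ℕ → C} {m : ℕ} (hq : ∀ i < m, Rz (q i) (q (i + 1))) :
    ∀ {i j : ℕ}, i < j → j ≤ m → q i < q j := by
  intro i j hij hjm
  have hij' : i + 1 ≤ j := hij
  induction j, hij' using Nat.le_induction with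
  | base => exact (hq i (by omega)).lt
  | succ n hn ih => exact lt_trans (ih (by omega) (by omega)) ((hq n (by omega)).lt)

lemma ChainIn.mono_len {S : Set C} {m k : ℕ} (h : ChainIn S m) (hk : k ≤ m) : ChainIn S k := by
  obtain ⟨q, h1, h2⟩ := h
  exact ⟨q, fun i hi => h1 i (le_trans hi hk), fun i hi => h2 i (lt_of_lt_of_le hi hk)⟩

lemma ChainIn.mono_set {S T : Set C} {m : ℕ} (hST : S ⊆ T) (h : ChainIn S m) : ChainIn T m := by
  obtain ⟨q, h1, h2⟩ := h
  exact ⟨q, fun i hi => hST (h1 i hi), h2⟩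

/-- Engine producing decreasing stacked copies of ℤ. -/
lemma engineDesc (D : C → ℕ → Prop) (hD : ∀ {z z' : C} {n : ℕ}, z ≤ z' → D z' n → D z n)
    (HE : ∀ n : ℕ, ∃ u v : C, Rz u v ∧ (¬ ∀ m, D u m) ∧ D v n) :
    Nonempty ((ℕᵒᵈ ×ₗ ℤ) ↪o C) := by
  classical
  have step : ∀ t : {p : C × C // Rz p.1 p.2 ∧ ¬ ∀ m, D p.1 m},
      ∃ t' : {p : C × C // Rz p.1 p.2 ∧ ¬ ∀ m, D p.1 m}, t'.val.2 < t.val.1 := by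
    intro t
    obtain ⟨N, hN⟩ := not_forall.mp t.prop.2
    obtain ⟨u, v, h1, h2, h3⟩ := HE N
    refine ⟨⟨(u, v), h1, h2⟩, ?_⟩
    by_contra hle
    push_neg at hle
    exact hN (hD hle h3)
  obtain ⟨u0, v0, h1, h2, _⟩ := HE 0
  let s : ℕ → {p : C × C // Rz p.1 p.2 ∧ ¬ ∀ m, D p.1 m} :=
    fun n => Nat.rec ⟨(u0, v0), h1, h2⟩ (fun _ t => (step t).choose) n
  have hs : ∀ n, (s (n + 1)).val.2 < (s n).val.1 := fun n => (step (s n)).choose_spec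
  choose f hf hfm using fun n => (s n).prop.1
  refine natod_lex_emb f hf ?_
  intro m j j'
  exact lt_trans (hfm (m + 1) j).2 (lt_trans (hs m) (hfm m j').1)

/-- Engine producing increasing stacked copies of ℤ. -/
lemma engineAsc (D : C → ℕ → Prop) (hD : ∀ {z z' : C} {n : ℕ}, z' ≤ z → D z' n → D z n)
    (HE : ∀ n : ℕ, ∃ u v : C, Rz u v ∧ D u n ∧ ¬ ∀ m, D v m) :
    Nonempty ((ℕ ×ₗ ℤ) ↪o C) := by
  classical
  have step : ∀ t : {p : C × C // Rz p.1 p.2 ∧ ¬ ∀ m, D p.2 m},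
      ∃ t' : {p : C × C // Rz p.1 p.2 ∧ ¬ ∀ m, D p.2 m}, t.val.2 < t'.val.1 := by
    intro t
    obtain ⟨N, hN⟩ := not_forall.mp t.prop.2
    obtain ⟨u, v, h1, h2, h3⟩ := HE N
    refine ⟨⟨(u, v), h1, h3⟩, ?_⟩
    by_contra hle
    push_neg at hle
    exact hN (hD hle h2)
  obtain ⟨u0, v0, h1, _, h3⟩ := HE 0
  let s : ℕ → {p : C × C // Rz p.1 p.2 ∧ ¬ ∀ m, D p.2 m} :=
    fun n => Nat.rec ⟨(u0, v0), h1, h3⟩ (fun _ t => (step t).choose) n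
  have hs : ∀ n, (s n).val.2 < (s (n + 1)).val.1 := fun n => (step (s n)).choose_spec
  choose f hf hfm using fun n => (s n).prop.1
  refine nat_lex_emb f hf ?_
  intro m j j'
  exact lt_trans (hfm m j).2 (lt_trans (hs m) (hfm (m + 1) j').1)

/-- Move the left bound of an interval with unbounded chains upwards, emitting a copy of ℤ. -/
lemma lemB (Hw : IsEmpty ((ℕ ×ₗ ℤ) ↪o C)) (x ℓ : C)
    (h : ∀ n, ChainIn (Set.Ico x ℓ) n) :
    ∃ ℓ', ℓ' < ℓ ∧ (∀ n, ChainIn (Set.Ico x ℓ') n) ∧ ZCopy (Set.Ico ℓ' ℓ) := by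
  by_contra hP
  push_neg at hP
  refine Hw.false (Classical.choice (engineAsc (fun z n => ChainIn (Set.Ico x z) n) ?_ ?_))
  · intro z z' n hzz hch
    exact hch.mono_set (Set.Ico_subset_Ico le_rfl hzz)
  · intro n
    obtain ⟨q, hmem, hq⟩ := h (n + 4)
    refine ⟨q (n + 2), q (n + 3), hq (n + 2) (by omega), ?_, ?_⟩
    · exact ⟨q, fun i hi => ⟨(hmem i (by omega)).1, chain_lt hq (by omega) (by omega)⟩,
        fun i hi => hq i (by omega)⟩
    · intro hall
      refine hP (q (n + 3)) (hmem (n + 3) (by omega)).2 hall ?_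
      refine ZCopy.mono ?_ (hq (n + 3) (by omega))
      intro z hz
      exact ⟨le_of_lt hz.1, lt_trans hz.2 (hmem (n + 4) (by omega)).2⟩

/-- Master lemma: if neither `ℤ·ω` nor `ℤ·ω*` embeds, chains of stacked ℤ-copies are bounded. -/
lemma master (Hw : IsEmpty ((ℕ ×ₗ ℤ) ↪o C)) (Hw' : IsEmpty ((ℕᵒᵈ ×ₗ ℤ) ↪o C))
    (HU : ∀ n, ChainIn (Set.univ : Set C) n) : False := by
  classical
  by_cases hF : ∃ x : C, ∀ n, ChainIn (Set.Ici x) n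
  · obtain ⟨x, hx⟩ := hF
    by_cases hI : ∃ ℓ : C, ∀ n, ChainIn (Set.Ico x ℓ) n
    · obtain ⟨ℓ0, hℓ0⟩ := hI
      have step : ∀ t : {z : C // ∀ n, ChainIn (Set.Ico x z) n},
          ∃ t' : {z : C // ∀ n, ChainIn (Set.Ico x z) n},
            t'.val < t.val ∧ ZCopy (Set.Ico t'.val t.val) := by
        intro t
        obtain ⟨ℓ', h1, h2, h3⟩ := lemB Hw x t.val t.prop
        exact ⟨⟨ℓ', h2⟩, h1, h3⟩
      let s : ℕ → {z : C // ∀ n, ChainIn (Set.Ico x z) n} :=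
        fun n => Nat.rec ⟨ℓ0, hℓ0⟩ (fun _ t => (step t).choose) n
      have hs : ∀ n, (s (n + 1)).val < (s n).val ∧
          ZCopy (Set.Ico (s (n + 1)).val (s n).val) := fun n => (step (s n)).choose_spec
      choose f hf hfm using fun n => (hs n).2
      refine Hw'.false (Classical.choice (natod_lex_emb f hf ?_))
      intro m j j'
      exact lt_of_lt_of_le (hfm (m + 1) j).2 (hfm m j').1
    · push_neg at hI
      refine Hw.false (Classical.choice (engineAsc (fun z n => ChainIn (Set.Ico x z) n) ?_ ?_))
      · intro z z' n hzz hch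
        exact hch.mono_set (Set.Ico_subset_Ico le_rfl hzz)
      · intro n
        obtain ⟨q, hmem, hq⟩ := hx (n + 2)
        refine ⟨q (n + 1), q (n + 2), hq (n + 1) (by omega), ?_, ?_⟩
        · exact ⟨q, fun i hi => ⟨hmem i (by omega), chain_lt hq (by omega) (by omega)⟩,
            fun i hi => hq i (by omega)⟩
        · intro hall
          obtain ⟨n₀, hn₀⟩ := hI (q (n + 2))
          exact hn₀ (hall n₀)
  · push_neg at hF
    refine Hw'.false (Classical.choice (engineDesc (fun z n => ChainIn (Set.Ici z) n) ?_ ?_))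
    · intro z z' n hzz hch
      exact hch.mono_set (Set.Ici_subset_Ici.mpr hzz)
    · intro n
      obtain ⟨q, _, hq⟩ := HU (n + 2)
      refine ⟨q 0, q 1, hq 0 (by omega), ?_, ?_⟩
      · intro hall
        obtain ⟨n₀, hn₀⟩ := hF (q 0)
        exact hn₀ (hall n₀)
      · exact ⟨fun i => q (i + 2), fun i hi => le_of_lt (chain_lt hq (by omega) (by omega)),
          fun i hi => hq (i + 2) (by omega)⟩

/-- A "bad" pair: the interval between contains both an infinite descending and an
infinite ascending sequence. -/
def Bad (a b : C) : Prop :=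
  a < b ∧ (∃ d : ℕ → C, StrictAnti d ∧ ∀ k, d k ∈ Set.Icc a b) ∧
    (∃ e : ℕ → C, StrictMono e ∧ ∀ k, e k ∈ Set.Icc a b)

lemma Bad.mono {a a' b b' : C} (ha : a' ≤ a) (hb : b ≤ b') (h : Bad a b) : Bad a' b' := by
  obtain ⟨hab, ⟨d, hd, hdm⟩, ⟨e, he, hem⟩⟩ := h
  exact ⟨lt_of_le_of_lt ha (lt_of_lt_of_le hab hb),
    ⟨d, hd, fun k => ⟨le_trans ha (hdm k).1, le_trans (hdm k).2 hb⟩⟩,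
    ⟨e, he, fun k => ⟨le_trans ha (hem k).1, le_trans (hem k).2 hb⟩⟩⟩

/-- Glue a descending sequence below an ascending sequence into a copy of ℤ. -/
lemma mk_copy (d e : ℕ → C) (hd : StrictAnti d) (he : StrictMono e)
    (hc : ∀ j k, d j < e k) :
    ∃ f : ℤ → C, StrictMono f ∧ ∀ z, (∃ j, f z = d j) ∨ (∃ j, f z = e j) := by
  classical
  refine ⟨fun z => if 0 ≤ z then e (z.toNat + 1) else d ((-z).toNat), ?_, ?_⟩
  · apply strictMono_int_of_lt_succ
    intro z
    by_cases h0 : 0 ≤ z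
    · rw [if_pos h0, if_pos (by omega)]
      exact he (by omega)
    · by_cases h1 : z = -1
      · subst h1
        rw [if_neg h0, if_pos (by omega)]
        exact hc _ _
      · rw [if_neg h0, if_neg (by omega)]
        exact hd (by omega)
  · intro z
    by_cases h0 : 0 ≤ z
    · right; exact ⟨z.toNat + 1, if_pos h0⟩
    · left; exact ⟨(-z).toNat, if_neg h0⟩

/-- Two adjacent bad pairs produce a copy of ℤ in the open interval. -/
lemma bad_bad_rz {a b c : C} (h1 : Bad a b) (h2 : Bad b c) : Rz a c := by
  obtain ⟨hab, ⟨d, hd, hdm⟩, -⟩ := h1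
  obtain ⟨hbc, -, ⟨e, he, hem⟩⟩ := h2
  obtain ⟨f, hf, hfm⟩ := mk_copy (fun j => d (j + 1)) (fun k => e (k + 1))
    (fun j k hjk => hd (by omega)) (fun j k hjk => he (by omega))
    (fun j k => lt_of_lt_of_le (lt_of_lt_of_le (hd (Nat.lt_succ_self j)) (hdm j).2)
      (hem (k + 1)).1)
  refine ⟨f, hf, ?_⟩
  intro z
  rcases hfm z with ⟨j, hj⟩ | ⟨j, hj⟩
  · rw [hj]
    exact ⟨lt_of_le_of_lt (hdm (j + 2)).1 (hd (by omega)),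
      lt_of_le_of_lt (hdm (j + 1)).2 hbc⟩
  · rw [hj]
    exact ⟨lt_of_lt_of_le hab (hem (j + 1)).1,
      lt_of_lt_of_le (he (by omega)) (hem (j + 2)).2⟩

def BadChain (m : ℕ) (q : ℕ → C) : Prop := ∀ i < m, Bad (q i) (q (i + 1))

lemma badchain_chainIn {m : ℕ} (q : ℕ → C) (h : BadChain (2 * m) q) :
    ChainIn (Set.univ : Set C) m := by
  refine ⟨fun i => q (2 * i), fun i _ => Set.mem_univ _, ?_⟩
  intro i hi
  have r := bad_bad_rz (h (2 * i) (by omega)) (h (2 * i + 1) (by omega))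
  have e : 2 * (i + 1) = 2 * i + 1 + 1 := by ring
  show Rz (q (2 * i)) (q (2 * (i + 1)))
  rw [e]
  exact r

/-- Extract a sequence witnessing non-well-foundedness. -/
lemma exists_desc_of_not_wf {β : Type*} (r : β → β → Prop) (h : ¬ WellFounded r) :
    ∃ g : ℕ → β, ∀ n, r (g (n + 1)) (g n) := by
  classical
  have h1 : ∃ a, ¬ Acc r a := by
    by_contra h2
    push_neg at h2
    exact h ⟨h2⟩
  have step : ∀ a : {a : β // ¬ Acc r a}, ∃ b : {a : β // ¬ Acc r a}, r b.val a.val := by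
    intro a
    by_contra hb
    push_neg at hb
    refine a.prop (Acc.intro a.val fun y hy => ?_)
    by_contra hy2
    exact hb ⟨y, hy2⟩ hy
  obtain ⟨a0, ha0⟩ := h1
  let s : ℕ → {a : β // ¬ Acc r a} :=
    fun n => Nat.rec ⟨a0, ha0⟩ (fun _ t => (step t).choose) n
  exact ⟨fun n => (s n).val, fun n => (step (s n)).choose_spec⟩

/-- If `L` has no bounded-below descending sequence, it is a surordinal. -/
lemma sur_of_no_seq (L : Set C)
    (h : ∀ x ∈ L, ∀ d : ℕ → C, StrictAnti d → ¬ (∀ k, d k ∈ L ∧ x ≤ d k)) :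
    IsSurordinal ↥L := by
  intro x₀
  by_contra hwf
  obtain ⟨g, hg⟩ := exists_desc_of_not_wf
    (fun (a b : ↥{y : ↥L | x₀ ≤ y}) => (a.val : ↥L) < b.val) hwf
  refine h x₀.val x₀.prop (fun k => ((g k).val : C)) ?_ ?_
  · refine strictAnti_nat_of_succ_lt fun k => ?_
    exact Subtype.coe_lt_coe.mpr (hg k)
  · intro k
    exact ⟨(g k).val.prop, Subtype.coe_le_coe.mpr (g k).prop⟩

/-- If `L` has no bounded-above ascending sequence, it is a reverse surordinal. -/
lemma revsur_of_no_seq (L : Set C)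
    (h : ∀ x ∈ L, ∀ e : ℕ → C, StrictMono e → ¬ (∀ k, e k ∈ L ∧ e k ≤ x)) :
    IsSurordinal (↥L)ᵒᵈ := by
  intro x₀
  by_contra hwf
  obtain ⟨g, hg⟩ := exists_desc_of_not_wf
    (fun (a b : ↥{y : (↥L)ᵒᵈ | x₀ ≤ y}) => (a.val : (↥L)ᵒᵈ) < b.val) hwf
  refine h (OrderDual.ofDual x₀).val (OrderDual.ofDual x₀).prop
    (fun k => ((OrderDual.ofDual (g k).val : ↥L) : C)) ?_ ?_
  · refine strictMono_nat_of_lt_succ fun k => ?_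
    exact Subtype.coe_lt_coe.mpr (hg k)
  · intro k
    exact ⟨(OrderDual.ofDual (g k).val).prop, Subtype.coe_le_coe.mpr ((g k).prop)⟩

/-- A surordinal admits no bounded-below descending sequence. -/
lemma sur_no_desc (L : Set C) (hs : IsSurordinal ↥L) (x : C) (hx : x ∈ L) (d : ℕ → C)
    (hd : StrictAnti d) (hm : ∀ k, d k ∈ L ∧ x ≤ d k) : False := by
  have wf := hs ⟨x, hx⟩
  let g : ℕ → ↥{y : ↥L | (⟨x, hx⟩ : ↥L) ≤ y} :=
    fun k => ⟨⟨d k, (hm k).1⟩, (hm k).2⟩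
  obtain ⟨a, ⟨k, hk⟩, hmin⟩ := wf.has_min (Set.range g) ⟨g 0, Set.mem_range_self 0⟩
  refine hmin (g (k + 1)) (Set.mem_range_self _) ?_
  rw [← hk]
  exact Subtype.mk_lt_mk.mpr (hd (Nat.lt_succ_self k))

/-- A reverse surordinal admits no bounded-above ascending sequence. -/
lemma revsur_no_asc (L : Set C) (hs : IsSurordinal (↥L)ᵒᵈ) (x : C) (hx : x ∈ L) (e : ℕ → C)
    (he : StrictMono e) (hm : ∀ k, e k ∈ L ∧ e k ≤ x) : False := by
  have wf := hs (OrderDual.toDual (⟨x, hx⟩ : ↥L))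
  let g : ℕ → ↥{y : (↥L)ᵒᵈ | OrderDual.toDual (⟨x, hx⟩ : ↥L) ≤ y} :=
    fun k => ⟨OrderDual.toDual ⟨e k, (hm k).1⟩, (hm k).2⟩
  obtain ⟨a, ⟨k, hk⟩, hmin⟩ := wf.has_min (Set.range g) ⟨g 0, Set.mem_range_self 0⟩
  refine hmin (g (k + 1)) (Set.mem_range_self _) ?_
  rw [← hk]
  exact Subtype.mk_lt_mk.mpr (he (Nat.lt_succ_self k))

lemma pg_mono {n : ℕ} (g : ℕ → Fin n) (hg : ∀ a b : ℕ, a ≤ b → g a ≤ g b) :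
    ∃ M, g M = g (M + 3) := by
  by_contra hc
  push_neg at hc
  have key : ∀ i, (i : ℕ) ≤ (g (3 * i) : ℕ) := by
    intro i
    induction i with
    | zero => exact Nat.zero_le _
    | succ i ih =>
      have h1 : g (3 * i) ≤ g (3 * i + 3) := hg _ _ (by omega)
      have h2 : g (3 * i) ≠ g (3 * i + 3) := hc (3 * i)
      have h3 : (g (3 * i) : ℕ) < (g (3 * i + 3) : ℕ) := by
        rcases lt_or_eq_of_le h1 with h | h
        · exact h
        · exact absurd h h2
      have he : 3 * (i + 1) = 3 * i + 3 := by ring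
      rw [he]
      omega
  have k1 := key n
  have k2 := (g (3 * n)).isLt
  omega

lemma pg_anti {n : ℕ} (g : ℕ → Fin n) (hg : ∀ a b : ℕ, a ≤ b → g b ≤ g a) :
    ∃ M, g M = g (M + 3) := by
  by_contra hc
  push_neg at hc
  have key : ∀ i, (g (3 * i) : ℕ) + i ≤ (g 0 : ℕ) := by
    intro i
    induction i with
    | zero => simp
    | succ i ih =>
      have h1 : g (3 * i + 3) ≤ g (3 * i) := hg _ _ (by omega)
      have h2 : g (3 * i) ≠ g (3 * i + 3) := hc (3 * i)
      have h3 : (g (3 * i + 3) : ℕ) < (g (3 * i) : ℕ) := by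
        rcases lt_or_eq_of_le h1 with h | h
        · exact h
        · exact absurd h.symm h2
      have he : 3 * (i + 1) = 3 * i + 3 := by ring
      rw [he]
      omega
  have k1 := key n
  have k2 := (g 0).isLt
  omega

end SurAux

open SurAux

theorem no_zeta_omega_iff_finite_sum_of_surordinals
    {C : Type u} [LinearOrder C] :
    (IsEmpty ((ℕ ×ₗ ℤ) ↪o C) ∧ IsEmpty ((ℕᵒᵈ ×ₗ ℤ) ↪o C)) ↔
      ∃ (n : ℕ) (I : Fin n → Set C),
        (∀ x : C, ∃ j, x ∈ I j) ∧
        (∀ j k : Fin n, j < k → ∀ x ∈ I j, ∀ y ∈ I k, x < y) ∧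
        (∀ j, IsSurordinal ↥(I j) ∨ IsSurordinal (↥(I j))ᵒᵈ) := by
  classical
  constructor
  · rintro ⟨Hw, Hw'⟩
    -- a global bound on chains of stacked ℤ-copies
    have hNex : ∃ N : ℕ, ∀ n, ChainIn (Set.univ : Set C) n → n ≤ N := by
      by_contra hcon
      push_neg at hcon
      refine master Hw Hw' fun n => ?_
      obtain ⟨m, hm, hlt⟩ := hcon n
      exact hm.mono_len (le_of_lt hlt)
    obtain ⟨N, hN⟩ := hNex
    have hbad : ∀ m (q : ℕ → C), BadChain m q → m ≤ 2 * N + 1 := by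
      intro m q hq
      by_contra hgt
      push_neg at hgt
      have h2 : BadChain (2 * (N + 1)) q := fun i hi => hq i (by omega)
      have := hN (N + 1) (badchain_chainIn q h2)
      omega
    set P : C → ℕ → Prop := fun x m => ∃ q : ℕ → C, q 0 = x ∧ BadChain m q with hPdef
    have hP0 : ∀ x, P x 0 := fun x => ⟨fun _ => x, rfl, fun i hi => absurd hi (by omega)⟩
    set hlev : C → ℕ := fun x => Nat.findGreatest (P x) (2 * N + 1) with hlevdef
    have hhle : ∀ x, hlev x ≤ 2 * N + 1 := fun x => Nat.findGreatest_le _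
    have hPh : ∀ x, P x (hlev x) := fun x => Nat.findGreatest_spec (Nat.zero_le _) (hP0 x)
    have hanti : ∀ x y : C, x ≤ y → hlev y ≤ hlev x := by
      intro x y hxy
      refine Nat.le_findGreatest (hhle y) ?_
      obtain ⟨q, hq0, hq⟩ := hPh y
      rcases Nat.eq_zero_or_pos (hlev y) with h0 | h0
      · rw [h0]; exact hP0 x
      · refine ⟨fun i => if i = 0 then x else q i, if_pos rfl, ?_⟩
        intro i hi
        rcases Nat.eq_zero_or_pos i with hi0 | hi0
        · subst hi0
          simp only [if_pos rfl, if_neg (by omega : (0 : ℕ) + 1 ≠ 0)]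
          exact Bad.mono (by rw [hq0]; exact hxy) le_rfl (hq 0 hi)
        · simp only [if_neg (by omega : i ≠ 0), if_neg (by omega : i + 1 ≠ 0)]
          exact hq i hi
    have hstrict : ∀ x y : C, Bad x y → hlev y < hlev x := by
      intro x y hxy
      obtain ⟨q, hq0, hq⟩ := hPh y
      have hPx : P x (hlev y + 1) := by
        refine ⟨fun i => match i with | 0 => x | (i + 1) => q i, rfl, ?_⟩
        intro i hi
        match i with
        | 0 =>
          show Bad x (q 0)
          rw [hq0]; exact hxy
        | (i + 1) =>
          show Bad (q i) (q (i + 1))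
          exact hq i (by omega)
      have hle2 : hlev y + 1 ≤ 2 * N + 1 := by
        obtain ⟨q', _, hq'⟩ := hPx
        exact hbad _ q' hq'
      have h5 : hlev y + 1 ≤ hlev x := by
        show hlev y + 1 ≤ Nat.findGreatest (P x) (2 * N + 1)
        exact Nat.le_findGreatest hle2 hPx
      omega
    refine ⟨2 * N + 2, fun j => {x | hlev x = 2 * N + 1 - (j : ℕ)}, ?_, ?_, ?_⟩
    · intro x
      refine ⟨⟨2 * N + 1 - hlev x, by omega⟩, ?_⟩
      show hlev x = 2 * N + 1 - (2 * N + 1 - hlev x)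
      have := hhle x
      omega
    · intro j k hjk x hx y hy
      have hj : (j : ℕ) < (k : ℕ) := hjk
      have hxv : hlev x = 2 * N + 1 - (j : ℕ) := hx
      have hyv : hlev y = 2 * N + 1 - (k : ℕ) := hy
      have hkB : (k : ℕ) < 2 * N + 2 := k.isLt
      by_contra hle
      push_neg at hle
      have := hanti y x hle
      omega
    · intro j
      have hgood : ∀ u ∈ {x | hlev x = 2 * N + 1 - (j : ℕ)},
          ∀ v ∈ {x | hlev x = 2 * N + 1 - (j : ℕ)}, ¬ Bad u v := by
        intro u hu v hv hb
        have h3 := hstrict u v hb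
        have h1 : hlev u = 2 * N + 1 - (j : ℕ) := hu
        have h2 : hlev v = 2 * N + 1 - (j : ℕ) := hv
        omega
      by_cases hA : ∃ x ∈ {x | hlev x = 2 * N + 1 - (j : ℕ)}, ∃ d : ℕ → C,
          StrictAnti d ∧ ∀ k, d k ∈ {x | hlev x = 2 * N + 1 - (j : ℕ)} ∧ x ≤ d k
      · right
        refine revsur_of_no_seq _ ?_
        intro x' hx' e he hem
        obtain ⟨x, hx, d, hd, hdm⟩ := hA
        refine hgood (min x (e 0)) ?_ (max (d 0) x') ?_ ?_
        · rcases le_total x (e 0) with hc | hc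
          · rw [min_eq_left hc]; exact hx
          · rw [min_eq_right hc]; exact (hem 0).1
        · rcases le_total (d 0) x' with hc | hc
          · rw [max_eq_right hc]; exact hx'
          · rw [max_eq_left hc]; exact (hdm 0).1
        · refine ⟨?_, ⟨d, hd, fun k => ⟨?_, ?_⟩⟩, ⟨e, he, fun k => ⟨?_, ?_⟩⟩⟩
          · exact lt_of_le_of_lt (min_le_right _ _)
              (lt_of_lt_of_le (he (Nat.lt_succ_self 0))
                (le_trans (hem 1).2 (le_max_right _ _)))
          · exact le_trans (min_le_left _ _) (hdm k).2
          · exact le_trans (hd.antitone (Nat.zero_le k)) (le_max_left _ _)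
          · exact le_trans (min_le_right _ _) (he.monotone (Nat.zero_le k))
          · exact le_trans (hem k).2 (le_max_right _ _)
      · left
        refine sur_of_no_seq _ ?_
        intro x hx d hd hdm
        exact hA ⟨x, hx, d, hd, hdm⟩
  · rintro ⟨n, I, hcov, hord, hsur⟩
    have hidx' := fun x : C => (hcov x).choose_spec
    set idx : C → Fin n := fun x => (hcov x).choose with hidxdef
    have hidx : ∀ x, x ∈ I (idx x) := hidx'
    have hmono : ∀ x y : C, x ≤ y → idx x ≤ idx y := by
      intro x y hxy
      by_contra hlt
      push_neg at hlt
      exact absurd hxy (not_le.mpr (hord _ _ hlt y (hidx y) x (hidx x)))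
    have hbetween : ∀ a c y : C, a ≤ y → y ≤ c → idx a = idx c → y ∈ I (idx a) := by
      intro a c y h1 h2 he
      have l1 := hmono a y h1
      have l2 := hmono y c h2
      have h3 : idx y = idx a := le_antisymm (by rw [he]; exact l2) l1
      rw [← h3]
      exact hidx y
    constructor
    · refine ⟨fun f => ?_⟩
      set gm : ℕ → Fin n := fun m => idx (f (toLex (m, (0 : ℤ)))) with hgm
      have gmono : ∀ a b : ℕ, a ≤ b → gm a ≤ gm b := by
        intro a b hab
        rcases eq_or_lt_of_le hab with h | h
        · rw [h]
        · exact hmono _ _ (le_of_lt (f.strictMono (toLex_lt_fst h)))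
      obtain ⟨M, hM⟩ := pg_mono gm gmono
      have hrow : ∀ (m : ℕ) (k : ℤ), M < m → m < M + 3 →
          f (toLex (m, k)) ∈ I (gm M) := by
        intro m k h1 h2
        exact hbetween (f (toLex (M, 0))) (f (toLex (M + 3, 0))) _
          (le_of_lt (f.strictMono (toLex_lt_fst h1)))
          (le_of_lt (f.strictMono (toLex_lt_fst h2))) hM
      rcases hsur (gm M) with hs | hs
      · exact sur_no_desc _ hs (f (toLex (M + 1, 0))) (hrow (M + 1) 0 (by omega) (by omega))
          (fun k => f (toLex (M + 2, -(k : ℤ))))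
          (fun a b hab => f.strictMono (toLex_lt_snd (neg_lt_neg (by exact_mod_cast hab))))
          (fun k => ⟨hrow (M + 2) _ (by omega) (by omega),
            le_of_lt (f.strictMono (toLex_lt_fst (by omega)))⟩)
      · exact revsur_no_asc _ hs (f (toLex (M + 2, 0))) (hrow (M + 2) 0 (by omega) (by omega))
          (fun k => f (toLex (M + 1, (k : ℤ))))
          (fun a b hab => f.strictMono (toLex_lt_snd (by exact_mod_cast hab)))
          (fun k => ⟨hrow (M + 1) _ (by omega) (by omega),
            le_of_lt (f.strictMono (toLex_lt_fst (by omega)))⟩)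
    · refine ⟨fun f => ?_⟩
      set gm : ℕ → Fin n := fun m => idx (f (toLex (OrderDual.toDual m, (0 : ℤ)))) with hgm
      have ganti : ∀ a b : ℕ, a ≤ b → gm b ≤ gm a := by
        intro a b hab
        rcases eq_or_lt_of_le hab with h | h
        · rw [h]
        · exact hmono _ _
            (le_of_lt (f.strictMono (toLex_lt_fst (OrderDual.toDual_lt_toDual.mpr h))))
      obtain ⟨M, hM⟩ := pg_anti gm ganti
      have hrow : ∀ (m : ℕ) (k : ℤ), M < m → m < M + 3 →
          f (toLex (OrderDual.toDual m, k)) ∈ I (gm M) := by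
        intro m k h1 h2
        have hres := hbetween (f (toLex (OrderDual.toDual (M + 3), 0)))
          (f (toLex (OrderDual.toDual M, 0))) (f (toLex (OrderDual.toDual m, k)))
          (le_of_lt (f.strictMono (toLex_lt_fst (OrderDual.toDual_lt_toDual.mpr h2))))
          (le_of_lt (f.strictMono (toLex_lt_fst (OrderDual.toDual_lt_toDual.mpr h1))))
          hM.symm
        rw [hM]
        exact hres
      rcases hsur (gm M) with hs | hs
      · exact sur_no_desc _ hs (f (toLex (OrderDual.toDual (M + 2), 0)))
          (hrow (M + 2) 0 (by omega) (by omega))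
          (fun k => f (toLex (OrderDual.toDual (M + 1), -(k : ℤ))))
          (fun a b hab => f.strictMono (toLex_lt_snd (neg_lt_neg (by exact_mod_cast hab))))
          (fun k => ⟨hrow (M + 1) _ (by omega) (by omega),
            le_of_lt (f.strictMono (toLex_lt_fst
              (OrderDual.toDual_lt_toDual.mpr (by omega))))⟩)
      · exact revsur_no_asc _ hs (f (toLex (OrderDual.toDual (M + 1), 0)))
          (hrow (M + 1) 0 (by omega) (by omega))
          (fun k => f (toLex (OrderDual.toDual (M + 2), (k : ℤ))))
          (fun a b hab => f.strictMono (toLex_lt_snd (by exact_mod_cast hab)))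
          (fun k => ⟨hrow (M + 2) _ (by omega) (by omega),
            le_of_lt (f.strictMono (toLex_lt_fst
              (OrderDual.toDual_lt_toDual.mpr (by omega))))⟩)
end

section
/- Let C be a chain such that C embeds into every one of its nonempty final segments (for every x ∈ C, there is an order embedding of C into {y ∈ C : x ≤ y} with the induced order). If C is not well-ordered, then sib(C) ≥ ℵ₀. -/
universe u v

/-- `a` has a strictly descending sequence below it. -/
def HasDescBelow {α : Type*} [Preorder α] (a : α) : Prop :=
  ∃ g : ℕ → α, StrictAnti g ∧ ∀ k, g k < a

theorem hasDescBelow_map {α β : Type*} [Preorder α] [Preorder β] (e : α ≃o β) {a : α}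
    (ha : HasDescBelow a) : HasDescBelow (e a) := by
  obtain ⟨g, hg, hlt⟩ := ha
  exact ⟨fun k => e (g k), fun i j hij => e.strictMono (hg hij),
    fun k => e.strictMono (hlt k)⟩

theorem hasDescBelow_congr {α β : Type*} [Preorder α] [Preorder β] (e : α ≃o β) (a : α) :
    HasDescBelow (e a) ↔ HasDescBelow a :=
  ⟨fun hb => by simpa using hasDescBelow_map e.symm hb, hasDescBelow_map e⟩

theorem aleph0_le_sib_of_embeds_in_final_segments
    {C : Type u} [LinearOrder C]
    (h : ∀ x : C, Nonempty (C ↪o ↥{y : C | x ≤ y}))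
    (hwo : ¬ WellFoundedLT C) :
    Cardinal.aleph0 ≤ sib C := by
  classical
  have hwf0 : ¬ WellFounded ((· < ·) : C → C → Prop) := fun w => hwo ⟨w⟩
  -- a strictly descending sequence in C
  have hseq : ∃ x : ℕ → C, StrictAnti x := by
    have hwf := hwf0
    rw [RelEmbedding.wellFounded_iff_isEmpty, not_isEmpty_iff] at hwf
    obtain ⟨f⟩ := hwf
    exact ⟨fun k => f k, fun i j hij => f.map_rel_iff.mpr hij⟩
  obtain ⟨x, hx⟩ := hseq
  -- D : the part of the final segment above x 0 whose elements have descending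
  -- sequences below them within that final segment
  set D : Set C :=
    {d | x 0 ≤ d ∧ ∃ g : ℕ → C, StrictAnti g ∧ ∀ k, x 0 ≤ g k ∧ g k < d} with hDdef
  -- D is upward closed
  have hup : ∀ d ∈ D, ∀ {y : C}, d ≤ y → y ∈ D := by
    rintro d ⟨hle, g, hg, hb⟩ y hdy
    exact ⟨hle.trans hdy, g, hg, fun k => ⟨(hb k).1, lt_of_lt_of_le (hb k).2 hdy⟩⟩
  -- witnesses of membership in D are themselves in D
  have hwit : ∀ (g : ℕ → C), StrictAnti g → (∀ k, x 0 ≤ g k) → ∀ k, g k ∈ D := by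
    intro g hg hb k
    refine ⟨hb k, fun j => g (k + 1 + j), fun i j hij => hg (by omega),
      fun j => ⟨hb _, hg (by omega)⟩⟩
  -- D is nonempty
  have hDne : D.Nonempty := by
    obtain ⟨e0⟩ := h (x 0)
    have hFwf : ¬ WellFounded ((· < ·) : ↥{y : C | x 0 ≤ y} → ↥{y : C | x 0 ≤ y} → Prop) :=
      fun w => hwf0 (e0.ltEmbedding.wellFounded w)
    rw [RelEmbedding.wellFounded_iff_isEmpty, not_isEmpty_iff] at hFwf
    obtain ⟨f⟩ := hFwf
    have hanti : StrictAnti (fun k => (f k : C)) := by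
      intro i j hij
      exact Subtype.coe_lt_coe.mpr (f.map_rel_iff.mpr hij)
    exact ⟨(f 0 : C), hwit (fun k => (f k : C)) hanti (fun k => (f k).2) 0⟩
  obtain ⟨d0, hd0⟩ := hDne
  -- the family of subsets
  set T : ℕ → Set C := fun n => D ∪ (x '' Set.Icc 1 n) with hTdef
  -- C embeds into each T n
  have hemb : ∀ n, Nonempty (C ↪o ↥(T n)) := by
    intro n
    obtain ⟨e1⟩ := h d0
    have f2 : ↥{y : C | d0 ≤ y} ↪o ↥(T n) :=
      ⟨⟨fun y => ⟨y.1, Or.inl (hup d0 hd0 y.2)⟩,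
        fun a b hab => Subtype.ext (by simpa using congrArg Subtype.val hab)⟩, Iff.rfl⟩
    exact ⟨e1.trans f2⟩
  -- counting the elements with no descending sequence below them
  have hE : ∀ n, Subtype.val '' {a : ↥(T n) | ¬ HasDescBelow a} = x '' Set.Icc 1 n := by
    intro n
    ext y
    constructor
    · rintro ⟨a, ha, rfl⟩
      rcases a.2 with hD' | him
      · exfalso
        apply ha
        obtain ⟨hle, g, hg, hb⟩ := hD'
        have hmem : ∀ k, g k ∈ T n := fun k => Or.inl (hwit g hg (fun k => (hb k).1) k)
        refine ⟨fun k => ⟨g k, hmem k⟩, fun i j hij => Subtype.mk_lt_mk.mpr (hg hij),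
          fun k => ?_⟩
        exact Subtype.coe_lt_coe.mp (hb k).2
      · exact him
    · rintro ⟨i, hi, rfl⟩
      refine ⟨⟨x i, Or.inr ⟨i, hi, rfl⟩⟩, ?_, rfl⟩
      rintro ⟨G, hG, hlt⟩
      have hvals : ∀ k, (G k).1 ∈ x '' Set.Icc 1 n := by
        intro k
        rcases (G k).2 with hD' | him
        · exfalso
          have h1 : (G k).1 < x i := Subtype.coe_lt_coe.mpr (hlt k)
          have h2 : x i < x 0 := hx (Nat.lt_of_lt_of_le Nat.zero_lt_one hi.1)
          exact absurd (hD'.1.trans_lt (h1.trans h2)) (lt_irrefl _)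
        · exact him
      have hinj : Function.Injective (fun k => (G k).1) := by
        have : StrictAnti (fun k => (G k).1) :=
          fun i j hij => Subtype.coe_lt_coe.mpr (hG hij)
        exact this.injective
      have hinf : (Set.range fun k => (G k).1).Infinite :=
        Set.infinite_range_of_injective hinj
      exact hinf (((Set.finite_Icc 1 n).image x).subset (Set.range_subset_iff.mpr hvals))
  have hcard : ∀ n, {a : ↥(T n) | ¬ HasDescBelow a}.ncard = n := by
    intro n
    have h1 : (Subtype.val '' {a : ↥(T n) | ¬ HasDescBelow a}).ncard
        = {a : ↥(T n) | ¬ HasDescBelow a}.ncard :=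
      Set.ncard_image_of_injective _ Subtype.val_injective
    rw [← h1, hE n, Set.ncard_image_of_injective _ hx.injective, ← Finset.coe_Icc,
      Set.ncard_coe_finset, Nat.card_Icc]
    omega
  -- the injection into the quotient
  set r : {S : Set C // Nonempty (C ↪o ↥S)} → {S : Set C // Nonempty (C ↪o ↥S)} → Prop :=
    fun S T => Nonempty (↥S.1 ≃o ↥T.1) with hrdef
  have hequiv : Equivalence r :=
    ⟨fun S => ⟨OrderIso.refl _⟩, fun ⟨e⟩ => ⟨e.symm⟩, fun ⟨e⟩ ⟨e'⟩ => ⟨e.trans e'⟩⟩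
  set ψ : ℕ → Quot r := fun n => Quot.mk r ⟨T n, hemb n⟩ with hψdef
  have hψinj : Function.Injective ψ := by
    intro n m hnm
    have hrel : r ⟨T n, hemb n⟩ ⟨T m, hemb m⟩ :=
      hequiv.eqvGen_iff.mp (Quot.eqvGen_exact hnm)
    obtain ⟨e⟩ := hrel
    have hset : e '' {a : ↥(T n) | ¬ HasDescBelow a} = {a : ↥(T m) | ¬ HasDescBelow a} := by
      ext b
      constructor
      · rintro ⟨a, ha, rfl⟩
        exact fun hb => ha ((hasDescBelow_congr e a).mp hb)
      · intro hb
        exact ⟨e.symm b, fun ha => hb (by simpa using hasDescBelow_map e ha), by simp⟩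
    have h1 := hcard n
    have h2 := hcard m
    rw [← hset, Set.ncard_image_of_injective _ e.injective, h1] at h2
    exact h2
  haveI : Infinite (Quot r) := Infinite.of_injective ψ hψinj
  exact Cardinal.aleph0_le_mk _
end
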